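/- (Fundamental Inequality, lower bound; Garland.) Let X be a finite n-dimensional simplicial complex satisfying condition (1_X) and let 1 ≤ i ≤ n−1. Suppose that for every vertex v of X the reduced simplicial cohomology H̃^{i−1}(Lk(v), ℝ) vanishes, i.e.: if i = 1, every f ∈ C^0(Lk(v)) with d_v f = 0 is constant, and if i ≥ 2, every f ∈ C^{i−1}(Lk(v)) with d_v f = 0 lies in the image of d_v : C^{i−2}(Lk(v)) → C^{i−1}(Lk(v)). Suppose moreover λ > 0 is a real number such that for every vertex v, every nonzero eigenvalue of Δ_v acting on C^{i−1}(Lk(v)) is ≥ λ. Then every nonzero eigenvalue c of Δ acting on C^i(X) satisfies i·c ≥ (i+1)·λ − (n−i). -/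

import Mathlib

open Finset

open scoped Classical

variable {V : Type*}

/-- A (finite) simplicial complex on the vertex type `V`: a collection of nonempty
finite sets of vertices (the simplices) closed under passing to nonempty subsets. -/
def IsComplex [DecidableEq V] (K : Finset (Finset V)) : Prop :=
  (∀ s ∈ K, s.Nonempty) ∧ ∀ s ∈ K, ∀ t : Finset V, t ⊆ s → t.Nonempty → t ∈ K

/-- `K` is `n`-dimensional and satisfies condition `(1_X)`: every simplex has dimension
at most `n` and is a face of some `n`-dimensional simplex (one of cardinality `n+1`). -/
def IsPureDim [DecidableEq V] (K : Finset (Finset V)) (n : ℕ) : Prop :=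
  (∀ s ∈ K, s.card ≤ n + 1) ∧ ∀ s ∈ K, ∃ t ∈ K, s ⊆ t ∧ t.card = n + 1

/-- `wt K n s` : the number `w(s)` of `n`-dimensional simplices of `K` containing `s`. -/
noncomputable def wt [DecidableEq V] (K : Finset (Finset V)) (n : ℕ) (s : Finset V) : ℕ :=
  (K.filter fun t => s ⊆ t ∧ t.card = n + 1).card

/-- An `m`-tuple of vertices is allowed when its entries are distinct and form a simplex
of `K`; i.e. it is an oriented `(m-1)`-simplex of `K`. -/
def Allowed [DecidableEq V] [Fintype V] (K : Finset (Finset V)) {m : ℕ}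
    (v : Fin m → V) : Prop :=
  Function.Injective v ∧ Finset.image v Finset.univ ∈ K

/-- `f` is an `(m-1)`-cochain on `K`: a real-valued alternating function on oriented
`(m-1)`-simplices of `K` (realized as a function on all `m`-tuples of vertices which is
alternating and vanishes on tuples which are not oriented simplices of `K`). -/
def IsCochain [DecidableEq V] [Fintype V] (K : Finset (Finset V)) (m : ℕ)
    (f : (Fin m → V) → ℝ) : Prop :=
  (∀ (σ : Equiv.Perm (Fin m)) (v : Fin m → V),
      f (v ∘ σ) = ((Equiv.Perm.sign σ : ℤ) : ℝ) * f v) ∧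
  ∀ v : Fin m → V, ¬ Allowed K v → f v = 0

/-- The inner product `(f,g) = ∑_s w(s)·f(s)·g(s)` on `(m-1)`-cochains, the sum being over
the unoriented `(m-1)`-simplices `s` of `K` (each with an arbitrarily chosen orientation);
summing over all `m`-tuples counts each simplex `m!` times, whence the normalization. -/
noncomputable def innerC [DecidableEq V] [Fintype V] (K : Finset (Finset V)) (n m : ℕ)
    (f g : (Fin m → V) → ℝ) : ℝ :=
  (∑ v : Fin m → V, (wt K n (Finset.image v Finset.univ) : ℝ) * f v * g v) /
    (Nat.factorial m : ℝ)

/-- The coboundary `d : C^{m-1}(K) → C^m(K)`. -/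
noncomputable def cobound [DecidableEq V] [Fintype V] (K : Finset (Finset V)) {m : ℕ}
    (f : (Fin m → V) → ℝ) : (Fin (m + 1) → V) → ℝ :=
  fun v => if Allowed K v then
    ∑ j : Fin (m + 1), (-1 : ℝ) ^ (j : ℕ) * f (v ∘ Fin.succAbove j)
  else 0

/-- The operator `δ : C^m(K) → C^{m-1}(K)`,
`(δf)(s) = ∑_x (w([x,s])/w(s))·f([x,s])`, the sum being over the vertices `x`
such that `[x,s]` is an oriented simplex of `K`. -/
noncomputable def codiff [DecidableEq V] [Fintype V] (K : Finset (Finset V)) (n : ℕ) {m : ℕ}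
    (f : (Fin (m + 1) → V) → ℝ) : (Fin m → V) → ℝ :=
  fun s => ∑ x : V,
    if Allowed K (Fin.cons x s) then
      ((wt K n (Finset.image (Fin.cons x s) Finset.univ) : ℝ) /
          (wt K n (Finset.image s Finset.univ) : ℝ)) * f (Fin.cons x s)
    else 0

/-- The Laplace operator `Δ = δ ∘ d` on `(m-1)`-cochains. -/
noncomputable def lap [DecidableEq V] [Fintype V] (K : Finset (Finset V)) (n : ℕ) {m : ℕ}
    (f : (Fin m → V) → ℝ) : (Fin m → V) → ℝ :=
  codiff K n (cobound K f)

/-- `ρ_v : C^{m-1}(K) → C^{m-1}(K)`: `(ρ_v f)(s) = f(s)` if `v` is a vertex of `s`,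
and `0` otherwise. -/
noncomputable def rho [DecidableEq V] {m : ℕ} (v : V) (f : (Fin m → V) → ℝ) :
    (Fin m → V) → ℝ :=
  fun s => if ∃ j, s j = v then f s else 0

/-- The vertices of `K`. -/
noncomputable def verts [DecidableEq V] [Fintype V] (K : Finset (Finset V)) : Finset V :=
  Finset.univ.filter fun v => {v} ∈ K

/-- The link `Lk(v)` of a vertex `v`: all simplices `s` of `K` with `v ∉ s` and
`s ∪ {v} ∈ K`. -/
noncomputable def linkK [DecidableEq V] (K : Finset (Finset V)) (v : V) :
    Finset (Finset V) :=
  K.filter fun s => v ∉ s ∧ insert v s ∈ K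

/-- `τ_v : C^{m}(K) → C^{m-1}(Lk(v))`: `(τ_v f)(s) = f([v,s])` for `s` an oriented
simplex of the link `Lk(v)`. -/
noncomputable def tau [DecidableEq V] [Fintype V] (K : Finset (Finset V)) (v : V) {m : ℕ}
    (f : (Fin (m + 1) → V) → ℝ) : (Fin m → V) → ℝ :=
  fun s => if Allowed (linkK K v) s then f (Fin.cons v s) else 0

/-- `c` is an eigenvalue of the Laplace operator acting on `(m-1)`-cochains of `K`. -/
def IsEigen [DecidableEq V] [Fintype V] (K : Finset (Finset V)) (n m : ℕ) (c : ℝ) : Prop :=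
  ∃ f : (Fin m → V) → ℝ, f ≠ 0 ∧ IsCochain K m f ∧ lap K n f = c • f

section GarlandBasics
set_option linter.unusedSectionVars false

variable [DecidableEq V] [Fintype V]

/-- Alternating functions on tuples. -/
def AltFun (m : ℕ) (f : (Fin m → V) → ℝ) : Prop :=
  ∀ (σ : Equiv.Perm (Fin m)) (v : Fin m → V),
    f (v ∘ σ) = ((Equiv.Perm.sign σ : ℤ) : ℝ) * f v

lemma altFun_zero_of_not_injective {m : ℕ} {f : (Fin m → V) → ℝ}
    (hf : AltFun m f) {v : Fin m → V} (hv : ¬ Function.Injective v) : f v = 0 := by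
  obtain ⟨a, b, hab, hne⟩ := Function.not_injective_iff.1 hv
  have hvv : v ∘ (Equiv.swap a b) = v := by
    funext k
    rcases eq_or_ne k a with rfl | hka
    · simp [Equiv.swap_apply_left, hab.symm]
    rcases eq_or_ne k b with rfl | hkb
    · simp [Equiv.swap_apply_right, hab]
    · simp [Equiv.swap_apply_of_ne_of_ne hka hkb]
  have := hf (Equiv.swap a b) v
  rw [hvv, Equiv.Perm.sign_swap hne] at this
  push_cast at this
  linarith

lemma image_comp_perm {m : ℕ} (v : Fin m → V) (σ : Equiv.Perm (Fin m)) :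
    Finset.image (v ∘ σ) Finset.univ = Finset.image v Finset.univ := by
  ext y
  simp only [Finset.mem_image, Finset.mem_univ, true_and, Function.comp_apply]
  constructor
  · rintro ⟨a, rfl⟩; exact ⟨σ a, rfl⟩
  · rintro ⟨a, rfl⟩; exact ⟨σ.symm a, by simp⟩

lemma allowed_comp_perm {K : Finset (Finset V)} {m : ℕ} {v : Fin m → V}
    (σ : Equiv.Perm (Fin m)) : Allowed K (v ∘ σ) ↔ Allowed K v := by
  unfold Allowed
  rw [image_comp_perm]
  constructor
  · rintro ⟨h1, h2⟩
    refine ⟨?_, h2⟩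
    have hv : v = (v ∘ σ) ∘ σ.symm := by funext k; simp
    rw [hv]
    exact h1.comp σ.symm.injective
  · rintro ⟨h1, h2⟩
    exact ⟨h1.comp σ.injective, h2⟩

lemma image_cons {m : ℕ} (x : V) (s : Fin m → V) :
    Finset.image (Fin.cons x s) Finset.univ = insert x (Finset.image s Finset.univ) := by
  ext y
  simp only [Finset.mem_image, Finset.mem_univ, true_and, Finset.mem_insert]
  constructor
  · rintro ⟨a, rfl⟩
    refine Fin.cases ?_ ?_ a
    · left; rfl
    · intro k; right; exact ⟨k, by simp⟩
  · rintro (rfl | ⟨a, rfl⟩)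
    · exact ⟨0, rfl⟩
    · exact ⟨a.succ, by simp⟩

lemma mem_linkK {K : Finset (Finset V)} {x : V} {s : Finset V} :
    s ∈ linkK K x ↔ s ∈ K ∧ x ∉ s ∧ insert x s ∈ K := by
  simp [linkK, Finset.mem_filter]

lemma wt_pos {K : Finset (Finset V)} {n : ℕ} (hpure : IsPureDim K n)
    {s : Finset V} (hs : s ∈ K) : 0 < wt K n s := by
  obtain ⟨t, ht, hst, hcard⟩ := hpure.2 s hs
  exact Finset.card_pos.2 ⟨t, Finset.mem_filter.2 ⟨ht, hst, hcard⟩⟩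

lemma linkK_isComplex {K : Finset (Finset V)} (hcplx : IsComplex K) (x : V) :
    IsComplex (linkK K x) := by
  constructor
  · intro s hs; exact hcplx.1 s (mem_linkK.1 hs).1
  · intro s hs t hts ht
    obtain ⟨hsK, hxs, hins⟩ := mem_linkK.1 hs
    refine mem_linkK.2 ⟨hcplx.2 s hsK t hts ht, fun hxt => hxs (hts hxt), ?_⟩
    exact hcplx.2 _ hins _ (Finset.insert_subset_insert x hts) ⟨x, Finset.mem_insert_self _ _⟩

lemma linkK_isPure {K : Finset (Finset V)} {n : ℕ} (hcplx : IsComplex K)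
    (hpure : IsPureDim K n) (hn : 1 ≤ n) (x : V) : IsPureDim (linkK K x) (n - 1) := by
  have hsub : n - 1 + 1 = n := Nat.sub_add_cancel hn
  constructor
  · intro s hs
    obtain ⟨hsK, hxs, hins⟩ := mem_linkK.1 hs
    have h1 : (insert x s).card ≤ n + 1 := hpure.1 _ hins
    have h2 : s.card + 1 = (insert x s).card := (Finset.card_insert_of_notMem hxs).symm
    omega
  · intro s hs
    obtain ⟨hsK, hxs, hins⟩ := mem_linkK.1 hs
    obtain ⟨t, htK, hsubt, hcard⟩ := hpure.2 _ hins
    have hxt : x ∈ t := hsubt (Finset.mem_insert_self _ _)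
    have hcardE : (t.erase x).card = n := by
      rw [Finset.card_erase_of_mem hxt, hcard]; omega
    refine ⟨t.erase x, ?_, ?_, by omega⟩
    · refine mem_linkK.2 ⟨hcplx.2 t htK _ (Finset.erase_subset _ _) ?_, ?_, ?_⟩
      · refine Finset.card_pos.1 (by omega)
      · exact Finset.notMem_erase _ _
      · rwa [Finset.insert_erase hxt]
    · exact Finset.subset_erase.2 ⟨(Finset.subset_insert _ _).trans hsubt, hxs⟩

lemma wt_link {K : Finset (Finset V)} {n : ℕ} (hcplx : IsComplex K) (hn : 1 ≤ n)
    {x : V} {s : Finset V} (hx : x ∉ s) :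
    wt (linkK K x) (n - 1) s = wt K n (insert x s) := by
  unfold wt
  rw [Nat.sub_add_cancel hn]
  apply Finset.card_bij (fun u _ => insert x u)
  · rintro u hu
    rw [Finset.mem_filter] at hu ⊢
    obtain ⟨huL, hsu, hcard⟩ := hu
    obtain ⟨huK, hxu, hinsu⟩ := mem_linkK.1 huL
    exact ⟨hinsu, Finset.insert_subset_insert x hsu,
      by rw [Finset.card_insert_of_notMem hxu, hcard]⟩
  · rintro u hu u' hu' h
    rw [Finset.mem_filter] at hu hu'
    have hxu : x ∉ u := (mem_linkK.1 hu.1).2.1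
    have hxu' : x ∉ u' := (mem_linkK.1 hu'.1).2.1
    have := congrArg (fun z => Finset.erase z x) h
    simpa [Finset.erase_insert hxu, Finset.erase_insert hxu'] using this
  · rintro t ht
    rw [Finset.mem_filter] at ht
    obtain ⟨htK, hst, hcard⟩ := ht
    have hxt : x ∈ t := hst (Finset.mem_insert_self _ _)
    refine ⟨t.erase x, ?_, ?_⟩
    · rw [Finset.mem_filter]
      have hcardE : (t.erase x).card = n := by
        rw [Finset.card_erase_of_mem hxt, hcard]; omega
      refine ⟨mem_linkK.2 ⟨hcplx.2 t htK _ (Finset.erase_subset _ _)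
        (Finset.card_pos.1 (by omega)), Finset.notMem_erase _ _,
        by rwa [Finset.insert_erase hxt]⟩, ?_, hcardE⟩
      refine Finset.subset_erase.2 ⟨?_, hx⟩
      exact (Finset.subset_insert _ _).trans hst
    · rw [Finset.insert_erase hxt]

lemma allowed_cons_iff {K : Finset (Finset V)} (hcplx : IsComplex K) {m : ℕ}
    (hm : 1 ≤ m) (x : V) (s : Fin m → V) :
    Allowed K (Fin.cons x s) ↔ Allowed (linkK K x) s := by
  have himg : Finset.image (Fin.cons x s) Finset.univ
      = insert x (Finset.image s Finset.univ) := image_cons x s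
  have hne : (Finset.image s Finset.univ).Nonempty := by
    haveI : NeZero m := ⟨by omega⟩
    exact ⟨s 0, Finset.mem_image.2 ⟨0, Finset.mem_univ _, rfl⟩⟩
  constructor
  · rintro ⟨hinj, hmem⟩
    rw [Fin.cons_injective_iff] at hinj
    have hxs : x ∉ Finset.image s Finset.univ := by
      intro hx
      obtain ⟨a, _, ha⟩ := Finset.mem_image.1 hx
      exact hinj.1 ⟨a, ha⟩
    rw [himg] at hmem
    refine ⟨hinj.2, mem_linkK.2 ⟨?_, hxs, hmem⟩⟩
    exact hcplx.2 _ hmem _ (Finset.subset_insert _ _) hne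
  · rintro ⟨hinj, hmem⟩
    obtain ⟨hsK, hxs, hins⟩ := mem_linkK.1 hmem
    refine ⟨Fin.cons_injective_iff.2 ⟨?_, hinj⟩, by rwa [himg]⟩
    rintro ⟨a, ha⟩
    exact hxs (Finset.mem_image.2 ⟨a, Finset.mem_univ _, ha⟩)

lemma allowed_link_vertex {K : Finset (Finset V)} (hcplx : IsComplex K) {x : V}
    {m : ℕ} {s : Fin m → V} (h : Allowed (linkK K x) s) : x ∈ verts K := by
  obtain ⟨_, hmem⟩ := h
  obtain ⟨_, _, hins⟩ := mem_linkK.1 hmem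
  have : ({x} : Finset V) ∈ K :=
    hcplx.2 _ hins _ (Finset.singleton_subset_iff.2 (Finset.mem_insert_self _ _))
      ⟨x, Finset.mem_singleton_self x⟩
  simp [verts, this]

lemma allowed_comp_succAbove {K : Finset (Finset V)} (hcplx : IsComplex K) {m : ℕ}
    (hm : 1 ≤ m) {v : Fin (m + 1) → V} (hv : Allowed K v) (j : Fin (m + 1)) :
    Allowed K (v ∘ Fin.succAbove j) := by
  haveI : NeZero m := ⟨by omega⟩
  refine ⟨hv.1.comp (Fin.succAbove_right_injective), ?_⟩
  have hsub : Finset.image (v ∘ Fin.succAbove j) Finset.univ ⊆ Finset.image v Finset.univ := by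
    intro y hy
    obtain ⟨a, _, ha⟩ := Finset.mem_image.1 hy
    exact Finset.mem_image.2 ⟨j.succAbove a, Finset.mem_univ _, ha⟩
  exact hcplx.2 _ hv.2 _ hsub ⟨v (j.succAbove 0), Finset.mem_image.2 ⟨0, Finset.mem_univ _, rfl⟩⟩

lemma allowed_tail_of_cons {K : Finset (Finset V)} (hcplx : IsComplex K) {m : ℕ}
    (hm : 1 ≤ m) {x : V} {s : Fin m → V} (h : Allowed K (Fin.cons x s)) :
    Allowed K s := by
  have := allowed_comp_succAbove hcplx hm h 0
  have heq : (Fin.cons x s : Fin (m+1) → V) ∘ Fin.succAbove 0 = s := by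
    funext k
    simp [Fin.succAbove_zero]
  rwa [heq] at this

end GarlandBasics
section GarlandAlt
set_option linter.unusedSectionVars false

variable [DecidableEq V] [Fintype V]

lemma cons_comp_decompose {m : ℕ} (x : V) (s : Fin m → V) (σ : Equiv.Perm (Fin m)) :
    Fin.cons x (s ∘ σ) = (Fin.cons x s : Fin (m+1) → V) ∘
      (Equiv.Perm.decomposeFin.symm (0, σ)) := by
  funext k
  refine Fin.cases ?_ ?_ k
  · simp [Equiv.Perm.decomposeFin_symm_apply_zero]
  · intro k'
    simp [Equiv.Perm.decomposeFin_symm_apply_succ]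

lemma cons_cons_swap {m : ℕ} (x y : V) (s : Fin m → V) :
    (Fin.cons x (Fin.cons y s) : Fin (m+2) → V) ∘ (Equiv.swap 0 1)
      = Fin.cons y (Fin.cons x s) := by
  funext k
  refine Fin.cases ?_ ?_ k
  · simp [Equiv.swap_apply_left]
  · intro k'
    refine Fin.cases ?_ ?_ k'
    · simp only [Function.comp_apply]
      rw [show ((0 : Fin (m+1)).succ : Fin (m+2)) = 1 from rfl, Equiv.swap_apply_right]
      rfl
    · intro k''
      have h0 : (k''.succ.succ : Fin (m+2)) ≠ 0 := Fin.succ_ne_zero _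
      have h1 : (k''.succ.succ : Fin (m+2)) ≠ 1 := by
        simp [Fin.ext_iff]
      simp only [Function.comp_apply, Equiv.swap_apply_of_ne_of_ne h0 h1]
      simp

lemma cobound_apply_allowed {K : Finset (Finset V)} {m : ℕ} (f : (Fin m → V) → ℝ)
    {v : Fin (m+1) → V} (hv : Allowed K v) :
    cobound K f v = ∑ j : Fin (m + 1),
      ((Equiv.Perm.sign (Fin.cycleRange j) : ℤ) : ℝ) *
        f (Fin.tail (v ∘ (Fin.cycleRange j).symm)) := by
  rw [cobound, if_pos hv]
  refine Finset.sum_congr rfl fun j _ => ?_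
  have h1 : ((Equiv.Perm.sign (Fin.cycleRange j) : ℤ) : ℝ) = (-1 : ℝ) ^ (j : ℕ) := by
    rw [Fin.sign_cycleRange]
    push_cast
    ring
  have h2 : Fin.tail (v ∘ (Fin.cycleRange j).symm) = v ∘ Fin.succAbove j := by
    funext k
    simp [Fin.tail, Function.comp, Fin.cycleRange_symm_succ]
  rw [h1, h2]

lemma cobound_apply_not_allowed {K : Finset (Finset V)} {m : ℕ} (f : (Fin m → V) → ℝ)
    {v : Fin (m+1) → V} (hv : ¬ Allowed K v) : cobound K f v = 0 := if_neg hv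

lemma altFun_cobound {K : Finset (Finset V)} {m : ℕ} {f : (Fin m → V) → ℝ}
    (hf : AltFun m f) : AltFun (m+1) (cobound K f) := by
  intro σ v
  by_cases hv : Allowed K v
  · have hv' : Allowed K (v ∘ σ) := (allowed_comp_perm σ).2 hv
    rw [cobound_apply_allowed f hv', cobound_apply_allowed f hv, Finset.mul_sum]
    rw [← Equiv.sum_comp σ (fun j => ((Equiv.Perm.sign σ : ℤ) : ℝ) *
      (((Equiv.Perm.sign (Fin.cycleRange j) : ℤ) : ℝ) *
        f (Fin.tail (v ∘ (Fin.cycleRange j).symm))))]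
    refine Finset.sum_congr rfl fun j _ => ?_
    set π : Equiv.Perm (Fin (m+1)) :=
      (Fin.cycleRange (σ j)) * σ * (Fin.cycleRange j).symm with hπdef
    have hπ0 : π 0 = 0 := by
      simp only [hπdef, Equiv.Perm.mul_apply]
      rw [Fin.cycleRange_symm_zero, Fin.cycleRange_self]
    set τ : Equiv.Perm (Fin m) := (Equiv.Perm.decomposeFin π).2 with hτdef
    have hπ : π = Equiv.Perm.decomposeFin.symm (0, τ) := by
      have h0 : (Equiv.Perm.decomposeFin π).1 = 0 := by
        have := Equiv.Perm.decomposeFin_symm_apply_zero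
          (Equiv.Perm.decomposeFin π).1 (Equiv.Perm.decomposeFin π).2
        rw [Prod.mk.eta, Equiv.symm_apply_apply] at this
        rw [← hπ0, this]
      conv_lhs => rw [← Equiv.symm_apply_apply Equiv.Perm.decomposeFin π]
      rw [show Equiv.Perm.decomposeFin π = (0, τ) from Prod.ext h0 rfl]
    have hcomp : v ∘ σ ∘ (Fin.cycleRange j).symm
        = (v ∘ (Fin.cycleRange (σ j)).symm) ∘ π := by
      funext k
      simp only [hπdef, Function.comp_apply, Equiv.Perm.mul_apply]
      rw [Equiv.symm_apply_apply]
    have htail : Fin.tail ((v ∘ (Fin.cycleRange (σ j)).symm) ∘ π)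
        = (Fin.tail (v ∘ (Fin.cycleRange (σ j)).symm)) ∘ τ := by
      funext k
      show (v ∘ (Fin.cycleRange (σ j)).symm) (π k.succ) = _
      rw [hπ, Equiv.Perm.decomposeFin_symm_apply_succ, Equiv.swap_self]
      rfl
    have hsτ : Equiv.Perm.sign τ = Equiv.Perm.sign π := by
      rw [hπ, Equiv.Perm.decomposeFin.symm_sign, if_pos rfl, one_mul]
    have hsπ : Equiv.Perm.sign π = Equiv.Perm.sign (Fin.cycleRange (σ j))
        * Equiv.Perm.sign σ * Equiv.Perm.sign (Fin.cycleRange j) := by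
      simp [hπdef, Equiv.Perm.sign_mul, Equiv.Perm.sign_symm]
    have hu : Equiv.Perm.sign (Fin.cycleRange j) * Equiv.Perm.sign τ
        = Equiv.Perm.sign σ * Equiv.Perm.sign (Fin.cycleRange (σ j)) := by
      rw [hsτ, hsπ]
      have h2 : ∀ u w : ℤˣ, u * (w * u) = w := fun u w => by
        rw [mul_comm w u, ← mul_assoc, Int.units_mul_self, one_mul]
      calc Equiv.Perm.sign (Fin.cycleRange j) *
            (Equiv.Perm.sign (Fin.cycleRange (σ j)) * Equiv.Perm.sign σ
              * Equiv.Perm.sign (Fin.cycleRange j))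
          = Equiv.Perm.sign (Fin.cycleRange (σ j)) * Equiv.Perm.sign σ := by
            exact h2 _ _
        _ = _ := mul_comm _ _
    have huR : ((Equiv.Perm.sign (Fin.cycleRange j) : ℤ) : ℝ)
        * ((Equiv.Perm.sign τ : ℤ) : ℝ)
        = ((Equiv.Perm.sign σ : ℤ) : ℝ)
          * ((Equiv.Perm.sign (Fin.cycleRange (σ j)) : ℤ) : ℝ) := by
      have := congrArg (fun u : ℤˣ => ((u : ℤ) : ℝ)) hu
      push_cast at this
      simpa using this
    have hfeq : f (Fin.tail ((v ∘ σ) ∘ (Fin.cycleRange j).symm))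
        = ((Equiv.Perm.sign τ : ℤ) : ℝ)
          * f (Fin.tail (v ∘ (Fin.cycleRange (σ j)).symm)) := by
      rw [show (v ∘ σ) ∘ (Fin.cycleRange j).symm = v ∘ σ ∘ (Fin.cycleRange j).symm from rfl,
        hcomp, htail, hf τ]
    rw [hfeq, ← mul_assoc, huR]
    ring
  · have hv' : ¬ Allowed K (v ∘ σ) := fun h => hv ((allowed_comp_perm σ).1 h)
    rw [cobound_apply_not_allowed f hv', cobound_apply_not_allowed f hv, mul_zero]

lemma altFun_codiff {K : Finset (Finset V)} {n m : ℕ} {g : (Fin (m+1) → V) → ℝ}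
    (hg : AltFun (m+1) g) : AltFun m (codiff K n g) := by
  intro σ s
  unfold codiff
  rw [Finset.mul_sum]
  refine Finset.sum_congr rfl fun x _ => ?_
  have hkey := cons_comp_decompose x s σ
  have hA : Allowed K (Fin.cons x (s ∘ σ)) ↔ Allowed K (Fin.cons x s) := by
    rw [hkey]
    exact allowed_comp_perm _
  have himg : Finset.image (Fin.cons x (s ∘ σ)) Finset.univ
      = Finset.image (Fin.cons x s) Finset.univ := by
    rw [hkey, image_comp_perm]
  have himg2 : Finset.image (s ∘ σ) Finset.univ = Finset.image s Finset.univ :=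
    image_comp_perm s σ
  by_cases hx : Allowed K (Fin.cons x s)
  · rw [if_pos (hA.2 hx), if_pos hx, himg, himg2]
    have : g (Fin.cons x (s ∘ σ)) = ((Equiv.Perm.sign σ : ℤ) : ℝ) * g (Fin.cons x s) := by
      rw [hkey, hg (Equiv.Perm.decomposeFin.symm (0, σ)) (Fin.cons x s),
        Equiv.Perm.decomposeFin.symm_sign, if_pos rfl, one_mul]
    rw [this]
    ring
  · rw [if_neg (fun h => hx (hA.1 h)), if_neg hx, mul_zero]

lemma codiff_apply_not_allowed {K : Finset (Finset V)} (hcplx : IsComplex K) {n m : ℕ}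
    (hm : 1 ≤ m) (g : (Fin (m+1) → V) → ℝ) {s : Fin m → V} (hs : ¬ Allowed K s) :
    codiff K n g s = 0 := by
  unfold codiff
  refine Finset.sum_eq_zero fun x _ => ?_
  rw [if_neg]
  intro h
  have := allowed_tail_of_cons hcplx hm h
  exact hs this

lemma cochain_cobound {K : Finset (Finset V)} {m : ℕ} {f : (Fin m → V) → ℝ}
    (hf : IsCochain K m f) : IsCochain K (m+1) (cobound K f) :=
  ⟨altFun_cobound hf.1, fun _ hv => cobound_apply_not_allowed f hv⟩

lemma cochain_codiff {K : Finset (Finset V)} (hcplx : IsComplex K) {n m : ℕ}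
    (hm : 1 ≤ m) {g : (Fin (m+1) → V) → ℝ} (hg : IsCochain K (m+1) g) :
    IsCochain K m (codiff K n g) :=
  ⟨altFun_codiff hg.1, fun _ hv => codiff_apply_not_allowed hcplx hm _ hv⟩

lemma altFun_tau {K : Finset (Finset V)} {x : V} {m : ℕ} {f : (Fin (m+1) → V) → ℝ}
    (hf : AltFun (m+1) f) : AltFun m (tau K x f) := by
  intro σ s
  unfold tau
  have hA : Allowed (linkK K x) (s ∘ σ) ↔ Allowed (linkK K x) s := allowed_comp_perm σ
  by_cases hs : Allowed (linkK K x) s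
  · rw [if_pos (hA.2 hs), if_pos hs, cons_comp_decompose,
      hf (Equiv.Perm.decomposeFin.symm (0, σ)) (Fin.cons x s),
      Equiv.Perm.decomposeFin.symm_sign, if_pos rfl, one_mul]
  · rw [if_neg (fun h => hs (hA.1 h)), if_neg hs, mul_zero]

lemma cochain_tau {K : Finset (Finset V)} {x : V} {m : ℕ} {f : (Fin (m+1) → V) → ℝ}
    (hf : IsCochain K (m+1) f) : IsCochain (linkK K x) m (tau K x f) :=
  ⟨altFun_tau hf.1, fun _ hv => if_neg hv⟩

end GarlandAlt
section GarlandInner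
set_option linter.unusedSectionVars false
set_option maxHeartbeats 1000000

variable [DecidableEq V] [Fintype V]

lemma allowed_of_link {K : Finset (Finset V)} {x : V} {m : ℕ} {s : Fin m → V}
    (h : Allowed (linkK K x) s) : Allowed K s :=
  ⟨h.1, (mem_linkK.1 h.2).1⟩

lemma wt_tail_pos {K : Finset (Finset V)} {n : ℕ} (hcplx : IsComplex K)
    (hpure : IsPureDim K n) {m : ℕ} (hm : 1 ≤ m) {x : V} {s : Fin m → V}
    (h : Allowed K (Fin.cons x s)) : 0 < wt K n (Finset.image s Finset.univ) :=
  wt_pos hpure (allowed_tail_of_cons hcplx hm h).2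

/-- restriction of a cochain to the tuples allowed in the link of `x`. -/
noncomputable def restr (K : Finset (Finset V)) (x : V) {m : ℕ}
    (f : (Fin m → V) → ℝ) : (Fin m → V) → ℝ :=
  fun s => if Allowed (linkK K x) s then f s else 0

lemma innerC_comm (K : Finset (Finset V)) (n m : ℕ) (f g : (Fin m → V) → ℝ) :
    innerC K n m f g = innerC K n m g f := by
  unfold innerC
  congr 1
  exact Finset.sum_congr rfl fun v _ => by ring

lemma innerC_smul_right (K : Finset (Finset V)) (n m : ℕ) (f g : (Fin m → V) → ℝ) (c : ℝ) :
    innerC K n m f (c • g) = c * innerC K n m f g := by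
  unfold innerC
  rw [mul_div_assoc', Finset.mul_sum]
  congr 1
  exact Finset.sum_congr rfl fun v _ => by simp; ring

lemma innerC_zero_right (K : Finset (Finset V)) (n m : ℕ) (f : (Fin m → V) → ℝ) :
    innerC K n m f 0 = 0 := by
  simp [innerC]

lemma innerC_add_left (K : Finset (Finset V)) (n m : ℕ) (f g h : (Fin m → V) → ℝ) :
    innerC K n m (f + g) h = innerC K n m f h + innerC K n m g h := by
  unfold innerC
  rw [← add_div]
  congr 1
  rw [← Finset.sum_add_distrib]
  exact Finset.sum_congr rfl fun v _ => by simp [Pi.add_apply]; ring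

lemma innerC_smul_left (K : Finset (Finset V)) (n m : ℕ) (f g : (Fin m → V) → ℝ) (c : ℝ) :
    innerC K n m (c • f) g = c * innerC K n m f g := by
  rw [innerC_comm, innerC_smul_right, innerC_comm]

lemma innerC_sub_expand (K : Finset (Finset V)) (n m : ℕ) (f g : (Fin m → V) → ℝ) :
    innerC K n m (f - g) (f - g)
      = innerC K n m f f - 2 * innerC K n m f g + innerC K n m g g := by
  unfold innerC
  have : (∑ v : Fin m → V, (wt K n (Finset.image v Finset.univ) : ℝ) * (f - g) v * (f - g) v)
      = (∑ v : Fin m → V, (wt K n (Finset.image v Finset.univ) : ℝ) * f v * f v)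
        - 2 * (∑ v : Fin m → V, (wt K n (Finset.image v Finset.univ) : ℝ) * f v * g v)
        + ∑ v : Fin m → V, (wt K n (Finset.image v Finset.univ) : ℝ) * g v * g v := by
    rw [Finset.mul_sum, ← Finset.sum_sub_distrib, ← Finset.sum_add_distrib]
    exact Finset.sum_congr rfl fun v _ => by simp [Pi.sub_apply]; ring
  rw [this]
  ring

lemma innerC_nonneg (K : Finset (Finset V)) (n m : ℕ) (f : (Fin m → V) → ℝ) :
    0 ≤ innerC K n m f f := by
  apply div_nonneg _ (by positivity)
  apply Finset.sum_nonneg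
  intro v _
  rw [mul_assoc]
  exact mul_nonneg (Nat.cast_nonneg _) (mul_self_nonneg _)

lemma innerC_self_pos {K : Finset (Finset V)} {n : ℕ} (hpure : IsPureDim K n) {m : ℕ}
    {f : (Fin m → V) → ℝ} (hf : IsCochain K m f) (hne : f ≠ 0) :
    0 < innerC K n m f f := by
  obtain ⟨v, hv⟩ := Function.ne_iff.1 hne
  have hA : Allowed K v := by
    by_contra h
    exact hv (hf.2 v h)
  apply div_pos _ (by positivity)
  apply Finset.sum_pos'
  · intro u _
    rw [mul_assoc]
    exact mul_nonneg (Nat.cast_nonneg _) (mul_self_nonneg _)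
  · refine ⟨v, Finset.mem_univ _, ?_⟩
    have hw : 0 < wt K n (Finset.image v Finset.univ) := wt_pos hpure hA.2
    have : 0 < f v * f v := by
      rcases lt_or_gt_of_ne (show f v ≠ 0 by simpa using hv) with h | h
      · exact mul_pos_of_neg_of_neg h h
      · exact mul_pos h h
    rw [mul_assoc]
    positivity

lemma eq_zero_of_innerC_self {K : Finset (Finset V)} {n : ℕ} (hpure : IsPureDim K n) {m : ℕ}
    {f : (Fin m → V) → ℝ} (hf : IsCochain K m f) (h : innerC K n m f f = 0) :
    f = 0 := by
  by_contra hne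
  exact absurd h (innerC_self_pos hpure hf hne).ne'

lemma sum_comp_perm_tuples {k : ℕ} (σ : Equiv.Perm (Fin k)) (G : (Fin k → V) → ℝ) :
    ∑ t : Fin k → V, G (t ∘ σ) = ∑ t : Fin k → V, G t := by
  apply Fintype.sum_equiv (σ.symm.arrowCongr (Equiv.refl V))
  intro t
  congr 1

lemma sum_cons_tuples {m : ℕ} (F : (Fin (m+1) → V) → ℝ) :
    ∑ t : Fin (m+1) → V, F t = ∑ x : V, ∑ s : Fin m → V, F (Fin.cons x s) := by
  rw [← Equiv.sum_comp (Fin.consEquiv fun _ : Fin (m+1) => V) F, Fintype.sum_prod_type]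
  rfl

lemma factorial_cast_ne_zero (m : ℕ) : ((Nat.factorial m : ℕ) : ℝ) ≠ 0 := by
  exact_mod_cast (Nat.factorial_pos m).ne'

lemma sum_tau_sq {K : Finset (Finset V)} {n : ℕ} (hcplx : IsComplex K)
    (hpure : IsPureDim K n) (hn : 1 ≤ n) {m : ℕ} (hm : 1 ≤ m)
    (g : (Fin (m+1) → V) → ℝ) (hsupp : ∀ t, ¬ Allowed K t → g t = 0) :
    ∑ x : V, innerC (linkK K x) (n-1) m (tau K x g) (tau K x g)
      = ((m : ℝ) + 1) * innerC K n (m+1) g g := by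
  unfold innerC
  rw [← Finset.sum_div]
  have key : (∑ x : V, ∑ s : Fin m → V,
      (wt (linkK K x) (n-1) (Finset.image s Finset.univ) : ℝ) * tau K x g s * tau K x g s)
      = ∑ t : Fin (m+1) → V, (wt K n (Finset.image t Finset.univ) : ℝ) * g t * g t := by
    rw [sum_cons_tuples (fun t => (wt K n (Finset.image t Finset.univ) : ℝ) * g t * g t)]
    refine Finset.sum_congr rfl fun x _ => Finset.sum_congr rfl fun s _ => ?_
    by_cases hA : Allowed (linkK K x) s
    · have hx : x ∉ Finset.image s Finset.univ := (mem_linkK.1 hA.2).2.1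
      rw [tau, if_pos hA, image_cons, ← wt_link hcplx hn hx]
    · rw [tau, if_neg hA,
        hsupp _ (fun h => hA ((allowed_cons_iff hcplx hm x s).1 h))]
      ring
  rw [key, Nat.factorial_succ]
  have h1 : ((Nat.factorial m : ℕ) : ℝ) ≠ 0 := factorial_cast_ne_zero m
  have h2 : ((m : ℝ) + 1) ≠ 0 := by positivity
  push_cast
  field_simp

lemma count_extensions {K : Finset (Finset V)} {n : ℕ} (hcplx : IsComplex K)
    {m : ℕ} {A : Finset V} (hcard : A.card = m + 1) :
    ∑ x : V, (if x ∉ A ∧ insert x A ∈ K then wt K n (insert x A) else 0)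
      = (n - m) * wt K n A := by
  have step1 : ∀ x : V, (if x ∉ A ∧ insert x A ∈ K then wt K n (insert x A) else 0)
      = ∑ t ∈ K, (if (x ∉ A ∧ insert x A ∈ K) ∧ insert x A ⊆ t ∧ t.card = n + 1
          then 1 else 0) := by
    intro x
    by_cases hc : x ∉ A ∧ insert x A ∈ K
    · rw [if_pos hc, wt, Finset.card_filter]
      exact Finset.sum_congr rfl fun t _ => by simp [hc]
    · rw [if_neg hc]
      symm
      exact Finset.sum_eq_zero fun t _ => by simp [hc]
  simp only [step1]
  rw [Finset.sum_comm]
  have step2 : ∀ t ∈ K, (∑ x : V, if (x ∉ A ∧ insert x A ∈ K) ∧ insert x A ⊆ t ∧ t.card = n + 1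
      then 1 else 0) = (if A ⊆ t ∧ t.card = n + 1 then n - m else 0) := by
    intro t ht
    by_cases hAt : A ⊆ t ∧ t.card = n + 1
    · rw [if_pos hAt]
      have hterm : ∀ x : V, (if (x ∉ A ∧ insert x A ∈ K) ∧ insert x A ⊆ t ∧ t.card = n + 1
          then 1 else 0) = if x ∈ t \ A then 1 else 0 := by
        intro x
        by_cases hx : x ∈ t \ A
        · rw [if_pos hx, if_pos]
          obtain ⟨hxt, hxA⟩ := Finset.mem_sdiff.1 hx
          have hsub : insert x A ⊆ t := Finset.insert_subset hxt hAt.1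
          exact ⟨⟨hxA, hcplx.2 t ht _ hsub ⟨x, Finset.mem_insert_self _ _⟩⟩, hsub, hAt.2⟩
        · rw [if_neg hx, if_neg]
          rintro ⟨⟨hxA, _⟩, hsub, _⟩
          exact hx (Finset.mem_sdiff.2 ⟨hsub (Finset.mem_insert_self _ _), hxA⟩)
      simp only [hterm]
      rw [Finset.sum_ite_mem, Finset.univ_inter, Finset.sum_const, smul_eq_mul, mul_one,
        Finset.card_sdiff_of_subset hAt.1, hAt.2, hcard]
      omega
    · rw [if_neg hAt]
      refine Finset.sum_eq_zero fun x _ => ?_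
      rw [if_neg]
      rintro ⟨⟨_, _⟩, hsub, hct⟩
      exact hAt ⟨(Finset.subset_insert _ _).trans hsub, hct⟩
  rw [Finset.sum_congr rfl step2, ← Finset.sum_filter, Finset.sum_const, smul_eq_mul,
    wt, mul_comm]

end GarlandInner
section GarlandIdent
set_option linter.unusedSectionVars false
set_option maxHeartbeats 1000000

variable [DecidableEq V] [Fintype V]

lemma allowed_link_iff {K : Finset (Finset V)} {x : V} {m : ℕ} {s : Fin m → V} :
    Allowed (linkK K x) s ↔ Allowed K s ∧ x ∉ Finset.image s Finset.univ ∧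
      insert x (Finset.image s Finset.univ) ∈ K := by
  unfold Allowed
  rw [mem_linkK]
  tauto

lemma sum_rest_sq {K : Finset (Finset V)} {n : ℕ} (hcplx : IsComplex K)
    (hpure : IsPureDim K n) (hn : 1 ≤ n) {m : ℕ} (f : (Fin (m+1) → V) → ℝ)
    (hf : IsCochain K (m+1) f) :
    ∑ x : V, innerC (linkK K x) (n-1) (m+1) (restr K x f) (restr K x f)
      = ((n - m : ℕ) : ℝ) * innerC K n (m+1) f f := by
  unfold innerC
  rw [← Finset.sum_div, ← mul_div_assoc]
  congr 1
  rw [Finset.sum_comm, Finset.mul_sum]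
  refine Finset.sum_congr rfl fun s _ => ?_
  by_cases hAs : Allowed K s
  · have hcard : (Finset.image s Finset.univ).card = m + 1 := by
      rw [Finset.card_image_of_injective _ hAs.1, Finset.card_univ, Fintype.card_fin]
    have key := count_extensions (K := K) (n := n) hcplx hcard
    have keyR := congrArg (fun z : ℕ => (z : ℝ)) key
    push_cast at keyR
    have hterm : ∀ x : V,
        (wt (linkK K x) (n-1) (Finset.image s Finset.univ) : ℝ) * restr K x f s * restr K x f s
        = (if x ∉ (Finset.image s Finset.univ) ∧ insert x (Finset.image s Finset.univ) ∈ K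
            then (wt K n (insert x (Finset.image s Finset.univ)) : ℝ) else 0)
          * (f s * f s) := by
      intro x
      by_cases hL : Allowed (linkK K x) s
      · have hcond := (allowed_link_iff.1 hL).2
        rw [restr, if_pos hL, if_pos hcond, wt_link hcplx hn hcond.1]
        ring
      · have hcond : ¬ (x ∉ (Finset.image s Finset.univ)
            ∧ insert x (Finset.image s Finset.univ) ∈ K) := by
          intro hc
          exact hL (allowed_link_iff.2 ⟨hAs, hc.1, hc.2⟩)
        rw [restr, if_neg hL, if_neg hcond]
        ring
    rw [Finset.sum_congr rfl fun x _ => hterm x, ← Finset.sum_mul, keyR]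
    ring
  · have h0 : f s = 0 := hf.2 s hAs
    have hterm : ∀ x : V,
        (wt (linkK K x) (n-1) (Finset.image s Finset.univ) : ℝ) * restr K x f s * restr K x f s
          = 0 := by
      intro x
      unfold restr
      split_ifs with h
      · rw [h0]; ring
      · ring
    rw [Finset.sum_congr rfl fun x _ => hterm x, Finset.sum_const_zero, h0]
    ring

lemma sum_rest_tau {K : Finset (Finset V)} {n : ℕ} (hcplx : IsComplex K)
    (hpure : IsPureDim K n) (hn : 1 ≤ n) {m : ℕ}
    (f : (Fin (m+1) → V) → ℝ) (g : (Fin (m+2) → V) → ℝ) :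
    ∑ x : V, innerC (linkK K x) (n-1) (m+1) (restr K x f) (tau K x g)
      = innerC K n (m+1) f (codiff K n g) := by
  unfold innerC
  rw [← Finset.sum_div]
  congr 1
  rw [Finset.sum_comm]
  refine Finset.sum_congr rfl fun s _ => ?_
  simp only [codiff]
  rw [Finset.mul_sum]
  refine Finset.sum_congr rfl fun x _ => ?_
  by_cases hA : Allowed K (Fin.cons x s)
  · have hL : Allowed (linkK K x) s := (allowed_cons_iff hcplx (by omega) x s).1 hA
    have hx : x ∉ Finset.image s Finset.univ := (mem_linkK.1 hL.2).2.1
    have hw0 : (0:ℝ) < (wt K n (Finset.image s Finset.univ) : ℝ) := by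
      exact_mod_cast wt_tail_pos hcplx hpure (by omega) hA
    rw [restr, if_pos hL, tau, if_pos hL, if_pos hA, wt_link hcplx hn hx, image_cons]
    field_simp
  · have hL : ¬ Allowed (linkK K x) s := fun h => hA ((allowed_cons_iff hcplx (by omega) x s).2 h)
    rw [restr, if_neg hL, if_neg hA]
    ring

lemma adjoint_d {K : Finset (Finset V)} {n : ℕ} (hcplx : IsComplex K) (hpure : IsPureDim K n)
    {m : ℕ} (hm : 1 ≤ m) (f : (Fin m → V) → ℝ) {g : (Fin (m+1) → V) → ℝ}
    (hg : AltFun (m+1) g) :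
    innerC K n (m+1) (cobound K f) g = innerC K n m f (codiff K n g) := by
  set G : (Fin (m+1) → V) → ℝ := fun u =>
    if Allowed K u then (wt K n (Finset.image u Finset.univ) : ℝ) * f (Fin.tail u) * g u
    else 0 with hG
  have stepL : (∑ t : Fin (m+1) → V,
      (wt K n (Finset.image t Finset.univ) : ℝ) * cobound K f t * g t)
      = ((m : ℝ) + 1) * ∑ u : Fin (m+1) → V, G u := by
    have h1 : ∀ t : Fin (m+1) → V,
        (wt K n (Finset.image t Finset.univ) : ℝ) * cobound K f t * g t
        = ∑ j : Fin (m+1), (if Allowed K t then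
            ((Equiv.Perm.sign (Fin.cycleRange j) : ℤ) : ℝ) *
              ((wt K n (Finset.image t Finset.univ) : ℝ) *
                f (Fin.tail (t ∘ (Fin.cycleRange j).symm)) * g t) else 0) := by
      intro t
      by_cases hA : Allowed K t
      · rw [cobound_apply_allowed f hA]
        simp only [if_pos hA]
        rw [Finset.mul_sum, Finset.sum_mul]
        exact Finset.sum_congr rfl fun j _ => by ring
      · simp [cobound_apply_not_allowed f hA, if_neg hA]
    rw [Finset.sum_congr rfl fun t _ => h1 t, Finset.sum_comm]
    have h2 : ∀ j : Fin (m+1), (∑ t : Fin (m+1) → V, if Allowed K t then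
        ((Equiv.Perm.sign (Fin.cycleRange j) : ℤ) : ℝ) *
          ((wt K n (Finset.image t Finset.univ) : ℝ) *
            f (Fin.tail (t ∘ (Fin.cycleRange j).symm)) * g t) else 0)
        = ∑ u : Fin (m+1) → V, G u := by
      intro j
      rw [← sum_comp_perm_tuples ((Fin.cycleRange j).symm) G]
      refine Finset.sum_congr rfl fun t _ => ?_
      by_cases hA : Allowed K t
      · have hA' : Allowed K (t ∘ (Fin.cycleRange j).symm) := (allowed_comp_perm _).2 hA
        rw [if_pos hA, hG]
        simp only
        rw [if_pos hA', image_comp_perm, hg ((Fin.cycleRange j).symm) t,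
          Equiv.Perm.sign_symm]
        ring
      · rw [if_neg hA, hG]
        simp only
        rw [if_neg (fun h => hA ((allowed_comp_perm _).1 h))]
    rw [Finset.sum_congr rfl fun j _ => h2 j, Finset.sum_const, Finset.card_univ,
      Fintype.card_fin, nsmul_eq_mul]
    push_cast
    ring
  have stepR : (∑ s : Fin m → V,
      (wt K n (Finset.image s Finset.univ) : ℝ) * f s * codiff K n g s)
      = ∑ u : Fin (m+1) → V, G u := by
    rw [sum_cons_tuples G]
    have h3 : ∀ s : Fin m → V,
        (wt K n (Finset.image s Finset.univ) : ℝ) * f s * codiff K n g s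
        = ∑ x : V, G (Fin.cons x s) := by
      intro s
      simp only [codiff]
      rw [Finset.mul_sum]
      refine Finset.sum_congr rfl fun x _ => ?_
      rw [hG]
      simp only
      by_cases hA : Allowed K (Fin.cons x s)
      · rw [if_pos hA, if_pos hA, Fin.tail_cons]
        have hw : (0:ℝ) < (wt K n (Finset.image s Finset.univ) : ℝ) := by
          exact_mod_cast wt_tail_pos hcplx hpure hm hA
        field_simp
      · rw [if_neg hA, if_neg hA, mul_zero]
    rw [Finset.sum_congr rfl fun s _ => h3 s, Finset.sum_comm]
  unfold innerC
  rw [stepL, stepR, Nat.factorial_succ]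
  have h1 : ((Nat.factorial m : ℕ) : ℝ) ≠ 0 := factorial_cast_ne_zero m
  have h2 : ((m : ℝ) + 1) ≠ 0 := by positivity
  push_cast
  field_simp

end GarlandIdent
section GarlandIdent2
set_option linter.unusedSectionVars false
set_option maxHeartbeats 1000000

variable [DecidableEq V] [Fintype V]

lemma div_cancel_middle (a b c g : ℝ) (ha : a ≠ 0) : a / b * (c / a * g) = c / b * g := by
  rw [← mul_assoc, div_mul_div_comm, mul_comm b a, mul_div_mul_left _ _ ha]

lemma tau_cobound_eq {K : Finset (Finset V)} (hcplx : IsComplex K) {m : ℕ} (hm : 1 ≤ m)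
    (x : V) (f : (Fin (m+1) → V) → ℝ) (s : Fin (m+1) → V) :
    tau K x (cobound K f) s = restr K x f s - cobound (linkK K x) (tau K x f) s := by
  by_cases hA : Allowed (linkK K x) s
  · have hAc : Allowed K (Fin.cons x s) := (allowed_cons_iff hcplx (by omega) x s).2 hA
    simp only [tau, restr, cobound, if_pos hA, if_pos hAc]
    have h0 : (Fin.cons x s : Fin (m+2) → V) ∘ Fin.succAbove 0 = s := by
      funext k
      simp [Fin.succAbove_zero]
    have hsucc : ∀ j : Fin (m+1), (Fin.cons x s : Fin (m+2) → V) ∘ Fin.succAbove j.succ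
        = Fin.cons x (s ∘ Fin.succAbove j) := by
      intro j
      funext k
      refine Fin.cases ?_ ?_ k
      · simp
      · intro k'
        simp [Fin.succ_succAbove_succ]
    rw [Fin.sum_univ_succ, h0]
    simp only [Fin.val_zero, pow_zero, one_mul]
    have hterm : ∀ j : Fin (m+1),
        (-1:ℝ)^(((j.succ : Fin (m+2))) : ℕ) * f ((Fin.cons x s) ∘ Fin.succAbove j.succ)
        = -((-1:ℝ)^((j : ℕ)) * (if Allowed (linkK K x) (s ∘ Fin.succAbove j)
            then f (Fin.cons x (s ∘ Fin.succAbove j)) else 0)) := by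
      intro j
      have hAl : Allowed (linkK K x) (s ∘ Fin.succAbove j) :=
        allowed_comp_succAbove (linkK_isComplex hcplx x) hm hA j
      rw [hsucc j, if_pos hAl, Fin.val_succ, pow_succ]
      ring
    rw [Finset.sum_congr rfl fun j _ => hterm j, Finset.sum_neg_distrib]
    ring
  · simp only [tau, restr, cobound, if_neg hA]
    ring

lemma codiff_codiff {K : Finset (Finset V)} {n : ℕ} (hcplx : IsComplex K)
    (hpure : IsPureDim K n) {m : ℕ} {g : (Fin (m+2) → V) → ℝ}
    (hg : IsCochain K (m+2) g) : codiff K n (codiff K n g) = 0 := by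
  funext s
  simp only [codiff, Pi.zero_apply]
  set T : V → V → ℝ := fun x y =>
    if Allowed K (Fin.cons y (Fin.cons x s))
    then (wt K n (Finset.image (Fin.cons y (Fin.cons x s)) Finset.univ) : ℝ)
        / (wt K n (Finset.image s Finset.univ) : ℝ) * g (Fin.cons y (Fin.cons x s))
    else 0 with hT
  have h1 : ∀ x : V, (if Allowed K (Fin.cons x s) then
      (wt K n (Finset.image (Fin.cons x s) Finset.univ) : ℝ)
        / (wt K n (Finset.image s Finset.univ) : ℝ) *
        ∑ y : V, (if Allowed K (Fin.cons y (Fin.cons x s)) then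
          (wt K n (Finset.image (Fin.cons y (Fin.cons x s)) Finset.univ) : ℝ)
            / (wt K n (Finset.image (Fin.cons x s) Finset.univ) : ℝ)
            * g (Fin.cons y (Fin.cons x s))
          else 0) else 0) = ∑ y : V, T x y := by
    intro x
    by_cases hA : Allowed K (Fin.cons x s)
    · rw [if_pos hA, Finset.mul_sum]
      refine Finset.sum_congr rfl fun y _ => ?_
      rw [hT]
      simp only
      by_cases hAy : Allowed K (Fin.cons y (Fin.cons x s))
      · rw [if_pos hAy, if_pos hAy]
        have hw : (0:ℝ) < (wt K n (Finset.image (Fin.cons x s) Finset.univ) : ℝ) := by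
          exact_mod_cast wt_pos hpure hA.2
        exact div_cancel_middle _ _ _ _ hw.ne'
      · rw [if_neg hAy, if_neg hAy, mul_zero]
    · rw [if_neg hA]
      symm
      refine Finset.sum_eq_zero fun y _ => ?_
      rw [hT]
      simp only
      rw [if_neg]
      intro h
      exact hA (allowed_tail_of_cons hcplx (by omega) h)
  rw [Finset.sum_congr rfl fun x _ => h1 x]
  have hanti : ∀ x y : V, T x y = - T y x := by
    intro x y
    rw [hT]
    simp only
    have hswap := cons_cons_swap x y s
    by_cases hAy : Allowed K (Fin.cons y (Fin.cons x s))
    · have hAx : Allowed K (Fin.cons x (Fin.cons y s)) := by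
        rw [← hswap] at hAy
        exact (allowed_comp_perm _).1 hAy
      have himg : Finset.image (Fin.cons y (Fin.cons x s)) Finset.univ
          = Finset.image (Fin.cons x (Fin.cons y s)) Finset.univ := by
        rw [← hswap, image_comp_perm]
      have hgs : g (Fin.cons y (Fin.cons x s)) = - g (Fin.cons x (Fin.cons y s)) := by
        rw [← hswap, hg.1 (Equiv.swap 0 1) (Fin.cons x (Fin.cons y s)),
          Equiv.Perm.sign_swap (by simp : (0 : Fin (m+2)) ≠ 1)]
        push_cast
        ring
      rw [if_pos hAy, if_pos hAx, himg, hgs]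
      ring
    · have hAx : ¬ Allowed K (Fin.cons x (Fin.cons y s)) := by
        intro h
        apply hAy
        rw [← hswap]
        exact (allowed_comp_perm _).2 h
      rw [if_neg hAy, if_neg hAx]
      ring
  have hS : (∑ x : V, ∑ y : V, T x y) = - ∑ x : V, ∑ y : V, T x y := by
    conv_lhs => rw [Finset.sum_comm]
    rw [← Finset.sum_neg_distrib]
    refine Finset.sum_congr rfl fun y _ => ?_
    rw [← Finset.sum_neg_distrib]
    exact Finset.sum_congr rfl fun x _ => hanti x y
  linarith

lemma codiff_tau_zero {K : Finset (Finset V)} {n : ℕ} (hcplx : IsComplex K)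
    (hpure : IsPureDim K n) (hn : 1 ≤ n) {m : ℕ} (hm : 1 ≤ m) (x : V)
    {g : (Fin (m+2) → V) → ℝ} (hg : IsCochain K (m+2) g)
    (hδ : codiff K n g = 0) :
    codiff (linkK K x) (n-1) (tau K x g) = 0 := by
  funext s
  simp only [codiff, Pi.zero_apply]
  by_cases hAs : Allowed (linkK K x) s
  · have hδ' := congrFun hδ (Fin.cons x s)
    simp only [codiff, Pi.zero_apply] at hδ'
    have hkey : ∀ y : V, (if Allowed (linkK K x) (Fin.cons y s) then
        (wt (linkK K x) (n-1) (Finset.image (Fin.cons y s) Finset.univ) : ℝ)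
          / (wt (linkK K x) (n-1) (Finset.image s Finset.univ) : ℝ)
          * tau K x g (Fin.cons y s) else 0)
        = - (if Allowed K (Fin.cons y (Fin.cons x s)) then
            (wt K n (Finset.image (Fin.cons y (Fin.cons x s)) Finset.univ) : ℝ)
              / (wt K n (Finset.image (Fin.cons x s) Finset.univ) : ℝ)
              * g (Fin.cons y (Fin.cons x s)) else 0) := by
      intro y
      have hswap := cons_cons_swap x y s
      by_cases hAy : Allowed (linkK K x) (Fin.cons y s)
      · have hAKxy : Allowed K (Fin.cons x (Fin.cons y s)) :=
          (allowed_cons_iff hcplx (by omega) x (Fin.cons y s)).2 hAy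
        have hAKyx : Allowed K (Fin.cons y (Fin.cons x s)) := by
          rw [← hswap]
          exact (allowed_comp_perm _).2 hAKxy
        have hxniy : x ∉ Finset.image (Fin.cons y s) Finset.univ :=
          (mem_linkK.1 hAy.2).2.1
        have hxnis : x ∉ Finset.image s Finset.univ := (mem_linkK.1 hAs.2).2.1
        have hw1 : wt (linkK K x) (n-1) (Finset.image (Fin.cons y s) Finset.univ)
            = wt K n (Finset.image (Fin.cons y (Fin.cons x s)) Finset.univ) := by
          rw [wt_link hcplx hn hxniy, image_cons, image_cons, image_cons,
            Finset.insert_comm]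
        have hw0 : wt (linkK K x) (n-1) (Finset.image s Finset.univ)
            = wt K n (Finset.image (Fin.cons x s) Finset.univ) := by
          rw [wt_link hcplx hn hxnis, image_cons]
        have hgs : g (Fin.cons x (Fin.cons y s)) = - g (Fin.cons y (Fin.cons x s)) := by
          rw [← hswap, hg.1 (Equiv.swap 0 1) (Fin.cons x (Fin.cons y s)),
            Equiv.Perm.sign_swap (by simp : (0 : Fin (m+2)) ≠ 1)]
          push_cast
          ring
        rw [if_pos hAy, if_pos hAKyx, tau, if_pos hAy, hw1, hw0, hgs]
        ring
      · have hAKyx : ¬ Allowed K (Fin.cons y (Fin.cons x s)) := by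
          intro h
          apply hAy
          rw [← hswap] at h
          have := (allowed_comp_perm _).1 h
          exact (allowed_cons_iff hcplx (by omega) x (Fin.cons y s)).1 this
        rw [if_neg hAy, if_neg hAKyx]
        ring
    rw [Finset.sum_congr rfl fun y _ => hkey y, Finset.sum_neg_distrib, hδ']
    ring
  · refine Finset.sum_eq_zero fun y _ => ?_
    rw [if_neg]
    intro h
    exact hAs (allowed_tail_of_cons (linkK_isComplex hcplx x) hm h)

lemma tau_zero_of_not_vert {K : Finset (Finset V)} (hcplx : IsComplex K) {x : V}
    (hx : x ∉ verts K) {m : ℕ} (f : (Fin (m+1) → V) → ℝ) : tau K x f = 0 := by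
  funext s
  exact if_neg fun h => hx (allowed_link_vertex hcplx h)

lemma cobound_zero_fun (K : Finset (Finset V)) (m : ℕ) :
    cobound K (0 : (Fin m → V) → ℝ) = 0 := by
  funext v
  simp [cobound]

lemma cobound_add (K : Finset (Finset V)) {m : ℕ} (f g : (Fin m → V) → ℝ) :
    cobound K (f + g) = cobound K f + cobound K g := by
  funext v
  simp only [cobound, Pi.add_apply]
  split_ifs with h
  · rw [← Finset.sum_add_distrib]
    exact Finset.sum_congr rfl fun j _ => by ring
  · simp

lemma cobound_smul (K : Finset (Finset V)) {m : ℕ} (c : ℝ) (f : (Fin m → V) → ℝ) :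
    cobound K (c • f) = c • cobound K f := by
  funext v
  simp only [cobound, Pi.smul_apply, smul_eq_mul]
  split_ifs with h
  · rw [Finset.mul_sum]
    exact Finset.sum_congr rfl fun j _ => by ring
  · simp

lemma codiff_add (K : Finset (Finset V)) (n : ℕ) {m : ℕ} (f g : (Fin (m+1) → V) → ℝ) :
    codiff K n (f + g) = codiff K n f + codiff K n g := by
  funext s
  simp only [codiff, Pi.add_apply]
  rw [← Finset.sum_add_distrib]
  refine Finset.sum_congr rfl fun x _ => ?_
  split_ifs with h
  · ring
  · simp

lemma codiff_smul (K : Finset (Finset V)) (n : ℕ) {m : ℕ} (c : ℝ) (f : (Fin (m+1) → V) → ℝ) :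
    codiff K n (c • f) = c • codiff K n f := by
  funext s
  simp only [codiff, Pi.smul_apply, smul_eq_mul]
  rw [Finset.mul_sum]
  refine Finset.sum_congr rfl fun x _ => ?_
  split_ifs with h
  · ring
  · simp

end GarlandIdent2
section GarlandOrth
set_option linter.unusedSectionVars false
set_option maxHeartbeats 1000000

variable [DecidableEq V] [Fintype V]

lemma tau_orth_one {K : Finset (Finset V)} {n : ℕ} (hcplx : IsComplex K)
    (hpure : IsPureDim K n) (hn : 1 ≤ n) {x : V} (hx : x ∈ verts K)
    {f : (Fin 2 → V) → ℝ} (hf : IsCochain K 2 f) (hδ : codiff K n f = 0)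
    (h : (Fin 1 → V) → ℝ)
    (hconst : ∀ s t : Fin 1 → V, Allowed (linkK K x) s → Allowed (linkK K x) t → h s = h t) :
    innerC (linkK K x) (n-1) 1 (tau K x f) h = 0 := by
  have hxK : ({x} : Finset V) ∈ K := by
    simpa [verts] using hx
  set s0 : Fin 0 → V := fun i => i.elim0 with hs0
  set sx : Fin 1 → V := Fin.cons x s0 with hsx
  have himsx : Finset.image sx Finset.univ = {x} := by
    rw [hsx, image_cons]
    simp
  have hwx : (0:ℝ) < (wt K n {x} : ℝ) := by exact_mod_cast wt_pos hpure hxK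
  have hmain : (∑ s : Fin 1 → V,
      (wt (linkK K x) (n-1) (Finset.image s Finset.univ) : ℝ) * tau K x f s) = 0 := by
    have hδ' := congrFun hδ sx
    simp only [codiff, Pi.zero_apply] at hδ'
    rw [himsx] at hδ'
    rw [← Equiv.sum_comp (Equiv.funUnique (Fin 1) V).symm
      (fun s => (wt (linkK K x) (n-1) (Finset.image s Finset.univ) : ℝ) * tau K x f s)]
    have hkey : ∀ y : V, (wt (linkK K x) (n-1)
        (Finset.image ((Equiv.funUnique (Fin 1) V).symm y) Finset.univ) : ℝ)
          * tau K x f ((Equiv.funUnique (Fin 1) V).symm y)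
        = - ((wt K n {x} : ℝ) * (if Allowed K (Fin.cons y sx) then
            (wt K n (Finset.image (Fin.cons y sx) Finset.univ) : ℝ) / (wt K n {x} : ℝ)
              * f (Fin.cons y sx) else 0)) := by
      intro y
      have hconsty : ((Equiv.funUnique (Fin 1) V).symm y) = Fin.cons y s0 := by
        funext k
        refine Fin.cases rfl (fun k' => k'.elim0) k
      rw [hconsty]
      have hswap := cons_cons_swap x y s0
      by_cases hAy : Allowed (linkK K x) (Fin.cons y s0)
      · have hAKxy : Allowed K (Fin.cons x (Fin.cons y s0)) :=
          (allowed_cons_iff hcplx (le_refl 1) x (Fin.cons y s0)).2 hAy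
        have hAKyx : Allowed K (Fin.cons y sx) := by
          rw [hsx, ← hswap]
          exact (allowed_comp_perm _).2 hAKxy
        have hxniy : x ∉ Finset.image (Fin.cons y s0) Finset.univ :=
          (mem_linkK.1 hAy.2).2.1
        have hw1 : (wt (linkK K x) (n-1) (Finset.image (Fin.cons y s0) Finset.univ) : ℝ)
            = (wt K n (Finset.image (Fin.cons y sx) Finset.univ) : ℝ) := by
          rw [wt_link hcplx hn hxniy, hsx, image_cons, image_cons, image_cons,
            Finset.insert_comm]
        have hgs : f (Fin.cons x (Fin.cons y s0)) = - f (Fin.cons y sx) := by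
          rw [hsx, ← hswap, hf.1 (Equiv.swap 0 1) (Fin.cons x (Fin.cons y s0)),
            Equiv.Perm.sign_swap (by simp : (0 : Fin 2) ≠ 1)]
          push_cast
          ring
        rw [tau, if_pos hAy, if_pos hAKyx, hw1, hgs]
        field_simp
      · have hAKyx : ¬ Allowed K (Fin.cons y sx) := by
          intro hAK
          apply hAy
          rw [hsx, ← hswap] at hAK
          exact (allowed_cons_iff hcplx (le_refl 1) x (Fin.cons y s0)).1
            ((allowed_comp_perm _).1 hAK)
        rw [tau, if_neg hAy, if_neg hAKyx]
        ring
    rw [Finset.sum_congr rfl fun y _ => hkey y, Finset.sum_neg_distrib, ← Finset.mul_sum,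
      hδ']
    ring
  unfold innerC
  rw [div_eq_zero_iff]
  left
  by_cases hex : ∃ s₀ : Fin 1 → V, Allowed (linkK K x) s₀
  · obtain ⟨t0, ht0⟩ := hex
    have hterm : ∀ s : Fin 1 → V,
        (wt (linkK K x) (n-1) (Finset.image s Finset.univ) : ℝ) * tau K x f s * h s
        = ((wt (linkK K x) (n-1) (Finset.image s Finset.univ) : ℝ) * tau K x f s) * h t0 := by
      intro s
      by_cases hA : Allowed (linkK K x) s
      · rw [hconst s t0 hA ht0]
      · rw [tau, if_neg hA]
        ring
    rw [Finset.sum_congr rfl fun s _ => hterm s, ← Finset.sum_mul, hmain, zero_mul]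
  · refine Finset.sum_eq_zero fun s _ => ?_
    rw [tau, if_neg (fun hA => hex ⟨s, hA⟩)]
    ring

end GarlandOrth
section GarlandSpec
set_option linter.unusedSectionVars false
set_option maxHeartbeats 2000000

variable [DecidableEq V] [Fintype V]

attribute [-instance] Submodule.innerProductSpace
attribute [-instance] Submodule.normedSpace
attribute [-instance] Submodule.normedAddCommGroup
attribute [-instance] Submodule.seminormedAddCommGroup

/-- The subspace of cochains. -/
noncomputable def cochainSub (L : Finset (Finset V)) (m : ℕ) :
    Submodule ℝ ((Fin m → V) → ℝ) where
  carrier := {f | IsCochain L m f}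
  add_mem' := by
    rintro f g ⟨hf1, hf2⟩ ⟨hg1, hg2⟩
    constructor
    · intro σ v
      simp only [Pi.add_apply, hf1 σ v, hg1 σ v]
      ring
    · intro v hv
      simp [Pi.add_apply, hf2 v hv, hg2 v hv]
  zero_mem' := by
    constructor
    · intro σ v
      simp
    · intro v _
      simp
  smul_mem' := by
    rintro c f ⟨hf1, hf2⟩
    constructor
    · intro σ v
      simp only [Pi.smul_apply, smul_eq_mul, hf1 σ v]
      ring
    · intro v hv
      simp [Pi.smul_apply, hf2 v hv]

lemma spec_lemma (L : Finset (Finset V)) (n' m : ℕ) (hLc : IsComplex L)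
    (hLp : IsPureDim L n') (hm : 1 ≤ m) (lam : ℝ)
    (hlam : ∀ c : ℝ, IsEigen L n' m c → c ≠ 0 → lam ≤ c)
    (g : (Fin m → V) → ℝ) (hg : IsCochain L m g)
    (horth : ∀ h : (Fin m → V) → ℝ, IsCochain L m h → lap L n' h = 0 →
      innerC L n' m g h = 0) :
    lam * innerC L n' m g g ≤ innerC L n' (m+1) (cobound L g) (cobound L g) := by
  classical
  set W := cochainSub (V := V) L m with hW
  have hmemW : ∀ a : W, IsCochain L m (a : (Fin m → V) → ℝ) := fun a => a.2
  have hlapmem : ∀ a : (Fin m → V) → ℝ, IsCochain L m a → IsCochain L m (lap L n' a) :=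
    fun a ha => cochain_codiff hLc hm (cochain_cobound ha)
  let T : W →ₗ[ℝ] W :=
    { toFun := fun a => ⟨lap L n' a.1, hlapmem a.1 (hmemW a)⟩
      map_add' := by
        rintro ⟨a, ha⟩ ⟨b, hb⟩
        apply Subtype.ext
        show lap L n' (a + b) = lap L n' a + lap L n' b
        unfold lap
        rw [cobound_add, codiff_add]
      map_smul' := by
        rintro c ⟨a, ha⟩
        apply Subtype.ext
        show lap L n' (c • a) = c • lap L n' a
        unfold lap
        rw [cobound_smul, codiff_smul] }
  let core : InnerProductSpace.Core ℝ W :=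
    { inner := fun a b => innerC L n' m a.1 b.1
      conj_inner_symm := fun a b => by
        simpa using innerC_comm L n' m b.1 a.1
      re_inner_nonneg := fun a => by
        simpa using innerC_nonneg L n' m a.1
      definite := fun a ha => by
        apply Subtype.ext
        exact eq_zero_of_innerC_self hLp (hmemW a) ha
      add_left := fun a b c => innerC_add_left L n' m a.1 b.1 c.1
      smul_left := fun a b r => by
        simpa using innerC_smul_left L n' m a.1 b.1 r }
  letI : NormedAddCommGroup W := core.toNormedAddCommGroup
  letI : InnerProductSpace ℝ W := InnerProductSpace.ofCore core.toCore
  haveI : FiniteDimensional ℝ W := inferInstance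
  have hinner : ∀ a b : W, (inner ℝ a b : ℝ) = innerC L n' m a.1 b.1 := fun a b => rfl
  have hadjWW : ∀ a b : W, innerC L n' m (lap L n' a.1) b.1
      = innerC L n' (m+1) (cobound L a.1) (cobound L b.1) := by
    intro a b
    have h1 : innerC L n' (m+1) (cobound L b.1) (cobound L a.1)
        = innerC L n' m b.1 (codiff L n' (cobound L a.1)) :=
      adjoint_d hLc hLp hm b.1 (altFun_cobound (hmemW a).1)
    calc innerC L n' m (lap L n' a.1) b.1
        = innerC L n' m b.1 (codiff L n' (cobound L a.1)) := innerC_comm _ _ _ _ _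
      _ = innerC L n' (m+1) (cobound L b.1) (cobound L a.1) := h1.symm
      _ = innerC L n' (m+1) (cobound L a.1) (cobound L b.1) := innerC_comm _ _ _ _ _
  have hT : T.IsSymmetric := by
    intro a b
    rw [hinner, hinner]
    show innerC L n' m (lap L n' a.1) b.1 = innerC L n' m a.1 (lap L n' b.1)
    calc innerC L n' m (lap L n' a.1) b.1
        = innerC L n' (m+1) (cobound L a.1) (cobound L b.1) := hadjWW a b
      _ = innerC L n' (m+1) (cobound L b.1) (cobound L a.1) := innerC_comm _ _ _ _ _
      _ = innerC L n' m (lap L n' b.1) a.1 := (hadjWW b a).symm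
      _ = innerC L n' m a.1 (lap L n' b.1) := innerC_comm _ _ _ _ _
  set N := Module.finrank ℝ W with hN
  have hrank : Module.finrank ℝ W = N := rfl
  set b := hT.eigenvectorBasis hrank with hb
  set μ := hT.eigenvalues hrank with hμ
  have happly : ∀ j : Fin N, T (b j) = μ j • b j := by
    intro j
    have h5 := hT.apply_eigenvectorBasis hrank j
    exact_mod_cast h5
  set gW : W := ⟨g, hg⟩ with hgW
  have hsum1 : innerC L n' m g g = ∑ j : Fin N,
      (inner ℝ (b j) gW : ℝ) * (inner ℝ (b j) gW : ℝ) := by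
    have := b.sum_inner_mul_inner gW gW
    rw [hinner] at this
    rw [← this]
    refine Finset.sum_congr rfl fun j _ => ?_
    rw [real_inner_comm gW (b j)]
  have hsum2 : innerC L n' (m+1) (cobound L g) (cobound L g) = ∑ j : Fin N,
      μ j * ((inner ℝ (b j) gW : ℝ) * (inner ℝ (b j) gW : ℝ)) := by
    have h1 : innerC L n' (m+1) (cobound L g) (cobound L g)
        = (inner ℝ (T gW) gW : ℝ) := by
      rw [hinner]
      exact (hadjWW gW gW).symm
    rw [h1, ← b.sum_inner_mul_inner (T gW) gW]
    refine Finset.sum_congr rfl fun j _ => ?_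
    have h2 : (inner ℝ (T gW) (b j) : ℝ) = μ j * (inner ℝ (b j) gW : ℝ) := by
      rw [hT gW (b j), happly j, real_inner_smul_right, real_inner_comm]
    rw [h2]
    ring
  have hterm : ∀ j : Fin N,
      lam * ((inner ℝ (b j) gW : ℝ) * (inner ℝ (b j) gW : ℝ))
        ≤ μ j * ((inner ℝ (b j) gW : ℝ) * (inner ℝ (b j) gW : ℝ)) := by
    intro j
    by_cases hμ0 : μ j = 0
    · have hker : lap L n' ((b j : W) : (Fin m → V) → ℝ) = 0 := by
        have h3 := happly j
        rw [hμ0, zero_smul] at h3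
        have h4 : ((T (b j) : W) : (Fin m → V) → ℝ) = 0 := by rw [h3]; rfl
        exact h4
      have hc0 : (inner ℝ (b j) gW : ℝ) = 0 := by
        rw [hinner]
        rw [innerC_comm]
        exact horth _ (hmemW (b j)) hker
      rw [hc0, hμ0]
      simp
    · have hne : ((b j : W) : (Fin m → V) → ℝ) ≠ 0 := by
        intro h0
        exact b.toBasis.ne_zero j (by
          apply Subtype.ext
          simpa using h0)
      have heig : IsEigen L n' m (μ j) := by
        refine ⟨(b j : W), hne, hmemW (b j), ?_⟩
        have h4 := congrArg (fun z : W => (z : (Fin m → V) → ℝ)) (happly j)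
        exact h4
      have hle : lam ≤ μ j := hlam (μ j) heig hμ0
      exact mul_le_mul_of_nonneg_right hle (mul_self_nonneg _)
  calc lam * innerC L n' m g g
      = ∑ j : Fin N, lam * ((inner ℝ (b j) gW : ℝ) * (inner ℝ (b j) gW : ℝ)) := by
        rw [hsum1, Finset.mul_sum]
    _ ≤ ∑ j : Fin N, μ j * ((inner ℝ (b j) gW : ℝ) * (inner ℝ (b j) gW : ℝ)) :=
        Finset.sum_le_sum fun j _ => hterm j
    _ = innerC L n' (m+1) (cobound L g) (cobound L g) := hsum2.symm

end GarlandSpec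
set_option maxHeartbeats 2000000

/-- Fundamental Inequality, lower bound; Garland: assume that for every
vertex `v` of `X` the reduced cohomology `H̃^{i-1}(Lk(v),ℝ)` vanishes (for `i = 1`:
closed `0`-cochains on `Lk(v)` are constant on the vertices of `Lk(v)`; for `i ≥ 2`:
closed `(i-1)`-cochains on `Lk(v)` are coboundaries), and that every nonzero eigenvalue
of `Δ_v` on `C^{i-1}(Lk(v))` is `≥ λ > 0`. Then every nonzero eigenvalue `c` of `Δ` on
`C^i(X)` satisfies `i·c ≥ (i+1)·λ - (n-i)`. -/
theorem fundamental_inequality_lower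
    [Fintype V] [DecidableEq V] (K : Finset (Finset V)) (n i : ℕ)
    (hcplx : IsComplex K) (hpure : IsPureDim K n) (hi1 : 1 ≤ i) (hin : i + 1 ≤ n)
    (hvanish1 : i = 1 → ∀ v ∈ verts K, ∀ f : (Fin 1 → V) → ℝ,
      IsCochain (linkK K v) 1 f → cobound (linkK K v) f = 0 →
      ∀ s t : Fin 1 → V, Allowed (linkK K v) s → Allowed (linkK K v) t → f s = f t)
    (hvanish2 : ∀ j : ℕ, i = j + 2 → ∀ v ∈ verts K, ∀ f : (Fin (j + 2) → V) → ℝ,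
      IsCochain (linkK K v) (j + 2) f → cobound (linkK K v) f = 0 →
      ∃ g : (Fin (j + 1) → V) → ℝ, IsCochain (linkK K v) (j + 1) g ∧
        cobound (linkK K v) g = f)
    (lam : ℝ) (hlampos : 0 < lam)
    (hlam : ∀ v ∈ verts K, ∀ c : ℝ, IsEigen (linkK K v) (n - 1) i c → c ≠ 0 → lam ≤ c)
    (c : ℝ) (hc : IsEigen K n (i + 1) c) (hc0 : c ≠ 0) :
    ((i : ℝ) + 1) * lam - ((n : ℝ) - (i : ℝ)) ≤ (i : ℝ) * c := by
  obtain ⟨f, hfne, hf, hlap⟩ := hc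
  have hn1 : 1 ≤ n := by omega
  -- δf = 0
  have hδf : codiff K n f = 0 := by
    have hδδ : codiff K n (codiff K n (cobound K f)) = 0 :=
      codiff_codiff hcplx hpure (cochain_cobound hf)
    have h1 : codiff K n (c • f) = 0 := by
      rw [← hlap]
      exact hδδ
    rw [codiff_smul] at h1
    rcases smul_eq_zero.1 h1 with h | h
    · exact absurd h hc0
    · exact h
  set F := innerC K n (i+1) f f with hF
  have hFpos : 0 < F := innerC_self_pos hpure hf hfne
  -- sum of squared link norms of tau f
  have hA1 : ∑ x : V, innerC (linkK K x) (n-1) i (tau K x f) (tau K x f)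
      = ((i:ℝ) + 1) * F :=
    sum_tau_sq hcplx hpure hn1 hi1 f hf.2
  -- per-vertex spectral inequality
  have hperx : ∀ x : V,
      lam * innerC (linkK K x) (n-1) i (tau K x f) (tau K x f)
        ≤ innerC (linkK K x) (n-1) (i+1) (cobound (linkK K x) (tau K x f))
            (cobound (linkK K x) (tau K x f)) := by
    intro x
    by_cases hxv : x ∈ verts K
    · apply spec_lemma (linkK K x) (n-1) i (linkK_isComplex hcplx x)
        (linkK_isPure hcplx hpure hn1 x) hi1 lam
        (fun c' hc' hc'0 => hlam x hxv c' hc' hc'0)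
        (tau K x f) (cochain_tau hf)
      -- orthogonality to harmonic cochains in the link
      intro h hh hlaph
      have hδh : cobound (linkK K x) h = 0 := by
        have h1 : innerC (linkK K x) (n-1) (i+1) (cobound (linkK K x) h)
            (cobound (linkK K x) h) = 0 := by
          rw [adjoint_d (linkK_isComplex hcplx x) (linkK_isPure hcplx hpure hn1 x) hi1 h
            (altFun_cobound hh.1)]
          show innerC (linkK K x) (n-1) i h (lap (linkK K x) (n-1) h) = 0
          rw [hlaph, innerC_zero_right]
        exact eq_zero_of_innerC_self (linkK_isPure hcplx hpure hn1 x)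
          (cochain_cobound hh) h1
      have hsplit : i = 1 ∨ ∃ j : ℕ, i = j + 2 := by
        rcases Nat.lt_or_ge i 2 with h2 | h2
        · left; omega
        · right; exact ⟨i - 2, by omega⟩
      rcases hsplit with h1 | ⟨j, hj⟩
      · subst h1
        exact tau_orth_one hcplx hpure hn1 hxv hf hδf h
          (hvanish1 rfl x hxv h hh hδh)
      · subst hj
        obtain ⟨u, hu, hcu⟩ := hvanish2 j rfl x hxv h hh hδh
        have hcodiffτ : codiff (linkK K x) (n-1) (tau K x f) = 0 :=
          codiff_tau_zero hcplx hpure hn1 (by omega) x hf hδf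
        calc innerC (linkK K x) (n-1) (j+2) (tau K x f) h
            = innerC (linkK K x) (n-1) (j+2) (cobound (linkK K x) u) (tau K x f) := by
              rw [← hcu, innerC_comm]
          _ = innerC (linkK K x) (n-1) (j+1) u (codiff (linkK K x) (n-1) (tau K x f)) :=
              adjoint_d (linkK_isComplex hcplx x) (linkK_isPure hcplx hpure hn1 x)
                (by omega) u (altFun_tau hf.1)
          _ = 0 := by rw [hcodiffτ, innerC_zero_right]
    · have hτ : tau K x f = 0 := tau_zero_of_not_vert hcplx hxv f
      rw [hτ, cobound_zero_fun]
      have h1 : innerC (linkK K x) (n-1) i (0 : (Fin i → V) → ℝ) 0 = 0 :=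
        innerC_zero_right _ _ _ _
      have h2 : innerC (linkK K x) (n-1) (i+1) (0 : (Fin (i+1) → V) → ℝ) 0 = 0 :=
        innerC_zero_right _ _ _ _
      rw [h1, h2, mul_zero]
  -- main inequality between sums
  have hsum : lam * (((i:ℝ)+1) * F) ≤ ∑ x : V, innerC (linkK K x) (n-1) (i+1)
      (cobound (linkK K x) (tau K x f)) (cobound (linkK K x) (tau K x f)) := by
    rw [← hA1, Finset.mul_sum]
    exact Finset.sum_le_sum fun x _ => hperx x
  -- decompose d_x tau_x f
  have hB1 : ∀ x : V, cobound (linkK K x) (tau K x f)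
      = restr K x f - tau K x (cobound K f) := by
    intro x
    funext s
    have h1 := tau_cobound_eq hcplx hi1 x f s
    simp only [Pi.sub_apply]
    linarith
  -- the three sums
  have hcross : ∑ x : V, innerC (linkK K x) (n-1) (i+1) (restr K x f)
      (tau K x (cobound K f)) = c * F := by
    rw [sum_rest_tau hcplx hpure hn1 f (cobound K f)]
    have h1 : codiff K n (cobound K f) = lap K n f := rfl
    rw [h1, hlap, innerC_smul_right]
  have hrest : ∑ x : V, innerC (linkK K x) (n-1) (i+1) (restr K x f) (restr K x f)
      = ((n - i : ℕ) : ℝ) * F :=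
    sum_rest_sq hcplx hpure hn1 f hf
  have hdf2 : innerC K n (i+2) (cobound K f) (cobound K f) = c * F := by
    rw [adjoint_d hcplx hpure (by omega) f (altFun_cobound hf.1)]
    have h1 : codiff K n (cobound K f) = lap K n f := rfl
    rw [h1, hlap, innerC_smul_right]
  have htau2 : ∑ x : V, innerC (linkK K x) (n-1) (i+1) (tau K x (cobound K f))
      (tau K x (cobound K f)) = ((i:ℝ)+2) * (c * F) := by
    have h1 := sum_tau_sq hcplx hpure hn1 (show 1 ≤ i+1 by omega) (cobound K f)
      (fun t ht => cobound_apply_not_allowed f ht)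
    rw [h1, hdf2]
    push_cast
    ring
  have hRHS : (∑ x : V, innerC (linkK K x) (n-1) (i+1)
      (cobound (linkK K x) (tau K x f)) (cobound (linkK K x) (tau K x f)))
      = ((n - i : ℕ) : ℝ) * F - 2 * (c * F) + ((i:ℝ)+2) * (c * F) := by
    have hx : ∀ x : V, innerC (linkK K x) (n-1) (i+1)
        (cobound (linkK K x) (tau K x f)) (cobound (linkK K x) (tau K x f))
        = innerC (linkK K x) (n-1) (i+1) (restr K x f) (restr K x f)
          - 2 * innerC (linkK K x) (n-1) (i+1) (restr K x f) (tau K x (cobound K f))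
          + innerC (linkK K x) (n-1) (i+1) (tau K x (cobound K f))
              (tau K x (cobound K f)) := by
      intro x
      rw [hB1 x, innerC_sub_expand]
    rw [Finset.sum_congr rfl fun x _ => hx x, Finset.sum_add_distrib,
      Finset.sum_sub_distrib, ← Finset.mul_sum, hrest, hcross, htau2]
  have hcast : ((n - i : ℕ) : ℝ) = (n : ℝ) - (i : ℝ) := by
    rw [Nat.cast_sub (by omega)]
  rw [hRHS, hcast] at hsum
  have hkey : ((i:ℝ)+1) * lam * F ≤ ((n:ℝ) - (i:ℝ) + (i:ℝ) * c) * F := by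
    nlinarith [hsum]
  have hfinal : ((i:ℝ)+1) * lam ≤ (n:ℝ) - (i:ℝ) + (i:ℝ) * c :=
    le_of_mul_le_mul_right (by nlinarith [hkey]) hFpos
  linarith
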